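/- Let (a_t), (A_t) be real numbers, (D_t), (Q_t) nonnegative reals, μ a real number, and set S_l = A_l² − μQ_l. Suppose the scalar Riccati recursion γ̄_0 = 0, γ̄_s = D_s + a_s² γ̄_{s−1}/(1 + S_{s−1} γ̄_{s−1}) has a unique nonnegative solution with 1 + S_l γ̄_l > 0 for all l. Define k_0 = 0, k_t = a_t² k_{t−1} + D_t, and the covariance K(t,s) = (∏_{u=s+1}^{t} a_u) k_s for 1 ≤ s ≤ t. Then the function γ̄(t,s) := (∏_{u=s+1}^{t} a_u) γ̄_s satisfies the Volterra equation γ̄(t,s) = K(t,s) − Σ_{l=1}^{s−1} γ̄(t,l) γ̄(s,l) S_l/(1 + S_l γ̄_l) for all 1 ≤ s ≤ t. -/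

import Mathlib

open Finset

/-- The variance sequence `k_t` of the Gaussian AR(1) process:
`k_0 = 0`, `k_t = a_t² k_{t−1} + D_t`. -/
def kseq (a D : ℕ → ℝ) : ℕ → ℝ
  | 0 => 0
  | t + 1 => a (t + 1) ^ 2 * kseq a D t + D (t + 1)

/-- the Riccati solution generates the Volterra solution in the
AR(1) case.  If `γ̄_0 = 0`, `γ̄_s = D_s + a_s² γ̄_{s−1}/(1 + S_{s−1} γ̄_{s−1})` is the
unique nonnegative solution with `1 + S_l γ̄_l > 0`, then
`γ̄(t,s) = (∏_{u=s+1}^t a_u) γ̄_s` solves the Volterra equation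
`γ̄(t,s) = K(t,s) − ∑_{l=1}^{s−1} γ̄(t,l) γ̄(s,l) S_l/(1 + S_l γ̄_l)` for
`K(t,s) = (∏_{u=s+1}^t a_u) k_s`. -/
theorem AR1_Riccati_solves_Volterra
    (a A D Q : ℕ → ℝ) (μ : ℝ) (S : ℕ → ℝ)
    (hD : ∀ t, 0 ≤ D t) (hQ : ∀ t, 0 ≤ Q t)
    (hS : ∀ l, S l = A l ^ 2 - μ * Q l)
    (g : ℕ → ℝ)
    (hg0 : g 0 = 0)
    (hgrec : ∀ s, 1 ≤ s → g s = D s + a s ^ 2 * g (s - 1) / (1 + S (s - 1) * g (s - 1)))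
    (hgnonneg : ∀ s, 0 ≤ g s)
    (hgden : ∀ l, 0 < 1 + S l * g l)
    (hguniq : ∀ g' : ℕ → ℝ, g' 0 = 0 →
      (∀ s, 1 ≤ s → g' s = D s + a s ^ 2 * g' (s - 1) / (1 + S (s - 1) * g' (s - 1))) →
      (∀ s, 0 ≤ g' s) → g' = g)
    (K : ℕ → ℕ → ℝ)
    (hK : ∀ s t, 1 ≤ s → s ≤ t → K t s = (∏ u ∈ Finset.Icc (s + 1) t, a u) * kseq a D s)
    (Γ : ℕ → ℕ → ℝ)
    (hΓ : ∀ s t, Γ t s = (∏ u ∈ Finset.Icc (s + 1) t, a u) * g s) :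
    ∀ s t, 1 ≤ s → s ≤ t →
      Γ t s = K t s - ∑ l ∈ Finset.Icc 1 (s - 1),
        Γ t l * Γ s l * (S l / (1 + S l * g l)) := by
  -- key scalar identity
  have key : ∀ n : ℕ, g (n + 1) = kseq a D (n + 1) -
      ∑ l ∈ Finset.Icc 1 n, (∏ u ∈ Finset.Ioc l (n + 1), a u) ^ 2 * g l ^ 2 *
        (S l / (1 + S l * g l)) := by
    intro n
    induction n with
    | zero =>
      simp [hgrec 1 le_rfl, hg0, kseq]
    | succ n ih =>
      have hrec := hgrec (n + 2) (by omega)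
      simp only [show n + 2 - 1 = n + 1 from rfl] at hrec
      have hd : (1 + S (n + 1) * g (n + 1)) ≠ 0 := ne_of_gt (hgden (n + 1))
      have hstep : g (n + 2) = D (n + 2) + a (n + 2) ^ 2 *
          (g (n + 1) - g (n + 1) ^ 2 * (S (n + 1) / (1 + S (n + 1) * g (n + 1)))) := by
        rw [hrec]
        congr 1
        have hd' : 1 + g (n + 1) * S (n + 1) ≠ 0 := by rwa [mul_comm] at hd
        field_simp
        try ring
        try exact Or.inl trivial
      rw [hstep]
      have hsplit : ∑ l ∈ Finset.Icc 1 (n + 1), (∏ u ∈ Finset.Ioc l (n + 2), a u) ^ 2 *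
            g l ^ 2 * (S l / (1 + S l * g l))
          = (∑ l ∈ Finset.Icc 1 n, (∏ u ∈ Finset.Ioc l (n + 2), a u) ^ 2 *
            g l ^ 2 * (S l / (1 + S l * g l)))
            + (∏ u ∈ Finset.Ioc (n + 1) (n + 2), a u) ^ 2 * g (n + 1) ^ 2 *
              (S (n + 1) / (1 + S (n + 1) * g (n + 1))) := by
        rw [← Finset.sum_Icc_succ_top (by omega : 1 ≤ n + 1)]
      have hlast : (∏ u ∈ Finset.Ioc (n + 1) (n + 2), a u) = a (n + 2) := by
        rw [Finset.prod_Ioc_succ_top (by omega : n + 1 ≤ n + 1)]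
        simp
      have hterm : ∀ l ∈ Finset.Icc 1 n, (∏ u ∈ Finset.Ioc l (n + 2), a u) ^ 2 *
            g l ^ 2 * (S l / (1 + S l * g l))
          = a (n + 2) ^ 2 * ((∏ u ∈ Finset.Ioc l (n + 1), a u) ^ 2 *
            g l ^ 2 * (S l / (1 + S l * g l))) := by
        intro l hl
        rw [Finset.mem_Icc] at hl
        rw [Finset.prod_Ioc_succ_top (by omega : l ≤ n + 1)]
        ring
      rw [hsplit, Finset.sum_congr rfl hterm, ← Finset.mul_sum, hlast]
      have hk : kseq a D (n + 1) = g (n + 1) + ∑ l ∈ Finset.Icc 1 n,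
          (∏ u ∈ Finset.Ioc l (n + 1), a u) ^ 2 * g l ^ 2 * (S l / (1 + S l * g l)) := by
        linarith [ih]
      show _ = a (n + 2) ^ 2 * kseq a D (n + 1) + D (n + 2) - _
      rw [hk]
      ring
  -- main statement
  intro s t hs hst
  obtain ⟨n, rfl⟩ : ∃ n, s = n + 1 := ⟨s - 1, by omega⟩
  simp only [Nat.add_sub_cancel]
  have hΓ' : ∀ l t', Γ t' l = (∏ u ∈ Finset.Ioc l t', a u) * g l := by
    intro l t'
    rw [hΓ l t', Finset.Icc_add_one_left_eq_Ioc]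
  have hterm : ∀ l ∈ Finset.Icc 1 n, Γ t l * Γ (n + 1) l * (S l / (1 + S l * g l))
      = (∏ u ∈ Finset.Ioc (n + 1) t, a u) *
        ((∏ u ∈ Finset.Ioc l (n + 1), a u) ^ 2 * g l ^ 2 * (S l / (1 + S l * g l))) := by
    intro l hl
    rw [Finset.mem_Icc] at hl
    rw [hΓ' l t, hΓ' l (n + 1),
      ← Finset.prod_Ioc_consecutive a (by omega : l ≤ n + 1) hst]
    ring
  rw [hΓ' (n + 1) t, hK (n + 1) t hs hst, Finset.Icc_add_one_left_eq_Ioc,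
    Finset.sum_congr rfl hterm, ← Finset.mul_sum, key n]
  ring
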